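/- Fix reals α, β with 0 ≤ α < 1 and β > 2. Let Q = {n ∈ ℕ : k₁((b_1,…,b_{n−1})) = 0 and k₁((b_1,…,b_n)) = 0} (the indices of b corresponding to flats of its path in the Hofbauer-type graph, with the convention k₁(empty word) = 0), and define c ∈ {0,…,ℓ}^ℕ by c_n = 1 if n ∈ Q and c_n = b_n otherwise. Then c ∈ Σ. -/

import Mathlib

noncomputable section

namespace IntermediateBeta

/-- The intermediate beta transformation `x ↦ βx + α mod 1`. -/
def F (α β : ℝ) (x : ℝ) : ℝ := Int.fract (β * x + α)

/-- The digit sequence of a point: `Om α β x n` is the index `i` with `F^[n] x ∈ J_i`.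
For `y ∈ [0,1)` we have `y ∈ J_i ↔ ⌊β y + α⌋ = i`. -/
def Om (α β : ℝ) (x : ℝ) : ℕ → ℕ := fun n => (⌊β * ((F α β)^[n] x) + α⌋).toNat

/-- `ℓ = ⌈α + β⌉ - 1`. -/
def ell (α β : ℝ) : ℕ := ⌈α + β⌉₊ - 1

/-- The subshift `Σ`: closure (in the product topology) of the set of digit sequences
of points of `[0,1)`. -/
def Sig (α β : ℝ) : Set (ℕ → ℕ) := closure (Om α β '' Set.Ico (0 : ℝ) 1)

/-- The shift map. -/
def shift (x : ℕ → ℕ) : ℕ → ℕ := fun n => x (n + 1)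

/-- Lexicographic order on one-sided sequences. -/
def lexLe (x y : ℕ → ℕ) : Prop := x = y ∨ ∃ k, (∀ i < k, x i = y i) ∧ x k < y k

/-- The language of a subset `S` of the full shift: the finite words occurring as
initial segments of elements of `S`. -/
def langOf (S : Set (ℕ → ℕ)) (w : List ℕ) : Prop :=
  ∃ x ∈ S, ∀ i : Fin w.length, x i = w.get i

/-- Membership in the language `𝓛` of the subshift `Σ`. -/
def inLang (α β : ℝ) (w : List ℕ) : Prop := langOf (Sig α β) w

/-- The tail segment of `w` of length `k` agrees with the initial segment of `s`
of length `k`. -/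
def tailAgrees (s : ℕ → ℕ) (w : List ℕ) (k : ℕ) : Prop :=
  k ≤ w.length ∧ ∀ i < k, w.getD (w.length - k + i) 0 = s i

/-- `kmax s w` is the length of the longest tail segment of `w` agreeing with an
initial segment of `s` (`k₁(w)` when `s = a`, `k₂(w)` when `s = b`). -/
def kmax (s : ℕ → ℕ) (w : List ℕ) : ℕ := sSup {k | tailAgrees s w k}

/-- `D a b` is the set of lengths `n` such that the initial segment of `b` of
length `n` occurs somewhere in `a`.  Thus `D a b` is the set `𝖣(a)` of the paper
and `D b a` is `𝖣(b)`. -/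
def D (a b : ℕ → ℕ) : Set ℕ := {n | ∃ j, ∀ i < n, b i = a (j + i)}

/-- Gluing of the words `w 0, v 0, w 1, v 1, …, v (n-1), w n`. -/
def glue {n : ℕ} (w : Fin (n + 1) → List ℕ) (v : Fin n → List ℕ) : List ℕ :=
  (List.ofFn fun i : Fin n => w i.castSucc ++ v i).flatten ++ w (Fin.last n)

/-- A collection `G` of words inside the language `lang` has specification: there
is `τ ∈ ℕ` such that any finite list of words of `G` can be glued, with gluing
words from `lang` of length `τ`, into a word of `lang`. -/
def HasSpec (lang G : List ℕ → Prop) : Prop :=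
  ∃ τ : ℕ, 1 ≤ τ ∧ ∀ n : ℕ, ∀ w : Fin (n + 1) → List ℕ, (∀ i, G (w i)) →
    ∃ v : Fin n → List ℕ, (∀ i, (v i).length = τ ∧ lang (v i)) ∧ lang (glue w v)

/-- The initial segment of a sequence, as a finite word. -/
def pre (s : ℕ → ℕ) (n : ℕ) : List ℕ := List.ofFn fun i : Fin n => s i

/-- Lexicographic order for finite words (of equal length). -/
def wordLe (u v : List ℕ) : Prop :=
  u = v ∨ ∃ k, (∀ i < k, u.getD i 0 = v.getD i 0) ∧ u.getD k 0 < v.getD k 0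

/-- Concatenation of a finite word with an infinite sequence. -/
def wcat (w : List ℕ) (x : ℕ → ℕ) : ℕ → ℕ := fun n =>
  if h : n < w.length then w.get ⟨n, h⟩ else x (n - w.length)

/-- The sequence `c` obtained from `b` by changing to `1` every letter of `b`
corresponding to a flat of the path of `b` in the Hofbauer-type graph (an index
`n` lies in `Q` iff `k₁(b_1…b_{n-1}) = 0` and `k₁(b_1…b_n) = 0`). -/
def cseq (a b : ℕ → ℕ) : ℕ → ℕ := fun n =>
  if kmax a (pre b n) = 0 ∧ kmax a (pre b (n + 1)) = 0 then 1 else b n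

section Helpers

variable {α β : ℝ}

lemma F_mem_Ico (α β x : ℝ) : F α β x ∈ Set.Ico (0:ℝ) 1 :=
  ⟨Int.fract_nonneg _, Int.fract_lt_one _⟩

lemma iter_mem_Ico (α β : ℝ) {x : ℝ} (hx : x ∈ Set.Ico (0:ℝ) 1) (n : ℕ) :
    (F α β)^[n] x ∈ Set.Ico (0:ℝ) 1 := by
  induction n with
  | zero => simpa using hx
  | succ n _ => rw [Function.iterate_succ_apply']; exact F_mem_Ico α β _

def stp (α β : ℝ) (pq : ℝ × ℝ) (d : ℕ) : ℝ × ℝ :=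
  (β * max pq.1 ((d - α)/β) + α - d, β * min pq.2 ((d + 1 - α)/β) + α - d)

def foA (α β : ℝ) (pq : ℝ × ℝ) (w : List ℕ) : ℝ × ℝ := w.foldl (stp α β) pq

def fo (α β : ℝ) (w : List ℕ) : ℝ × ℝ := foA α β (0,1) w

lemma fo_append (w : List ℕ) (d : ℕ) : fo α β (w ++ [d]) = stp α β (fo α β w) d := by
  simp [fo, foA, List.foldl_append]

lemma Om_succ (α β x : ℝ) (n : ℕ) : Om α β x (n+1) = Om α β (F α β x) n := by
  rw [Om, Om, Function.iterate_succ_apply]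

lemma Om_zero_eq_iff (hβ : 0 < β) (hα : 0 ≤ α) {x : ℝ} (hx : 0 ≤ x) (d : ℕ) :
    Om α β x 0 = d ↔ (d:ℝ) ≤ β * x + α ∧ β * x + α < d + 1 := by
  have h0 : (0:ℝ) ≤ β * x + α := by positivity
  have hfl : 0 ≤ ⌊β * x + α⌋ := Int.floor_nonneg.mpr h0
  have h1 : Om α β x 0 = (⌊β * x + α⌋).toNat := by simp [Om]
  rw [h1]
  have h2 : (⌊β * x + α⌋).toNat = d ↔ ⌊β * x + α⌋ = (d:ℤ) := by omega
  rw [h2, Int.floor_eq_iff]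
  push_cast
  exact Iff.rfl

lemma pre_length (s : ℕ → ℕ) (n : ℕ) : (pre s n).length = n := by simp [pre]

lemma pre_getD (s : ℕ → ℕ) {i n : ℕ} (h : i < n) : (pre s n).getD i 0 = s i := by
  rw [List.getD_eq_getElem _ _ (by simpa [pre_length] using h)]
  simp [pre]

lemma pre_succ (s : ℕ → ℕ) (n : ℕ) : pre s (n+1) = pre s n ++ [s n] := by
  rw [pre, List.ofFn_succ']
  simp [pre, List.concat_eq_append]


lemma floor_add_digit {x₁ : ℝ} (h0 : 0 ≤ x₁) (h1 : x₁ < 1) (d : ℕ) :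
    ⌊x₁ + (d:ℝ)⌋ = (d:ℤ) := by
  have : ⌊x₁⌋ = 0 := Int.floor_eq_zero_iff.mpr ⟨h0, h1⟩
  rw [show ((d:ℝ)) = ((d:ℤ):ℝ) by push_cast; ring, Int.floor_add_intCast, this, zero_add]

lemma stp_mono (hβ : 0 < β) {p q p' q' : ℝ} (h1 : p' ≤ p) (h2 : q ≤ q') (d : ℕ) :
    (stp α β (p',q') d).1 ≤ (stp α β (p,q) d).1 ∧
      (stp α β (p,q) d).2 ≤ (stp α β (p',q') d).2 := by
  have hm1 : max p' ((d - α)/β) ≤ max p ((d - α)/β) := max_le_max h1 le_rfl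
  have hm2 : min q ((d + 1 - α)/β) ≤ min q' ((d + 1 - α)/β) := min_le_min h2 le_rfl
  constructor <;> simp only [stp] <;> nlinarith

lemma mem_foA (hβ : 0 < β) (hα : 0 ≤ α) :
    ∀ (w : List ℕ) (p q x : ℝ), x ∈ Set.Ico (0:ℝ) 1 → p ≤ x → x < q →
      (∀ i < w.length, Om α β x i = w.getD i 0) →
      (foA α β (p,q) w).1 ≤ (F α β)^[w.length] x ∧
        (F α β)^[w.length] x < (foA α β (p,q) w).2 := by
  intro w
  induction w with
  | nil => intro p q x hx hp hq _; simpa [foA] using ⟨hp, hq⟩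
  | cons d t ih =>
    intro p q x hx hp hq hw
    have hd : Om α β x 0 = d := by simpa using hw 0 (by simp)
    rw [Om_zero_eq_iff hβ hα hx.1] at hd
    have hfl : ⌊β * x + α⌋ = (d:ℤ) := by
      rw [Int.floor_eq_iff]; push_cast; exact hd
    have hFx : F α β x = β * x + α - d := by
      rw [F, Int.fract, hfl]; push_cast; ring
    have hx1 : (d - α)/β ≤ x := by rw [div_le_iff₀ hβ]; nlinarith [hd.1]
    have hx2 : x < ((d:ℝ) + 1 - α)/β := by rw [lt_div_iff₀ hβ]; nlinarith [hd.2]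
    have h1 : (stp α β (p,q) d).1 ≤ F α β x := by
      have := max_le hp hx1
      simp only [stp]; rw [hFx]; nlinarith
    have h2 : F α β x < (stp α β (p,q) d).2 := by
      have := lt_min hq hx2
      simp only [stp]; rw [hFx]; nlinarith
    have hw' : ∀ i < t.length, Om α β (F α β x) i = t.getD i 0 := by
      intro i hi
      have := hw (i+1) (by simpa using Nat.succ_lt_succ hi)
      rw [Om_succ] at this
      simpa using this
    have hres := ih (stp α β (p,q) d).1 (stp α β (p,q) d).2 (F α β x)
      (F_mem_Ico α β x) h1 h2 hw'
    simpa [foA, Function.iterate_succ_apply] using hres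

lemma foA_realize (hβ : 0 < β) (hα : 0 ≤ α) :
    ∀ (w : List ℕ) (p q : ℝ), 0 ≤ p → q ≤ 1 →
      ∀ y, (foA α β (p,q) w).1 ≤ y → y < (foA α β (p,q) w).2 →
      ∃ x, p ≤ x ∧ x < q ∧ (∀ i < w.length, Om α β x i = w.getD i 0) ∧
        (F α β)^[w.length] x = y := by
  intro w
  induction w with
  | nil =>
    intro p q _ _ y h1 h2
    exact ⟨y, by simpa [foA] using h1, by simpa [foA] using h2, by simp, by simp⟩
  | cons d t ih =>
    intro p q hp hq y h1 h2
    have hP1 : 0 ≤ (stp α β (p,q) d).1 := by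
      have hM : ((d:ℝ) - α)/β ≤ max p ((d - α)/β) := le_max_right _ _
      rw [div_le_iff₀ hβ] at hM
      simp only [stp]; nlinarith
    have hP2 : (stp α β (p,q) d).2 ≤ 1 := by
      have hM : min q (((d:ℝ) + 1 - α)/β) ≤ ((d:ℝ) + 1 - α)/β := min_le_right _ _
      rw [le_div_iff₀ hβ] at hM
      simp only [stp]; nlinarith
    obtain ⟨x₁, hx₁p, hx₁q, hx₁w, hx₁F⟩ := ih (stp α β (p,q) d).1 (stp α β (p,q) d).2
      hP1 hP2 y (by simpa [foA] using h1) (by simpa [foA] using h2)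
    have hx₁0 : 0 ≤ x₁ := le_trans hP1 hx₁p
    have hx₁1 : x₁ < 1 := lt_of_lt_of_le hx₁q hP2
    simp only [stp] at hx₁p hx₁q
    have hmax : max p ((d - α)/β) ≤ (x₁ + d - α)/β := by
      rw [le_div_iff₀ hβ]; nlinarith
    have hmin : (x₁ + d - α)/β < min q (((d:ℝ) + 1 - α)/β) := by
      rw [div_lt_iff₀ hβ]; nlinarith
    have hxp : p ≤ (x₁ + d - α)/β := le_trans (le_max_left _ _) hmax
    have hx0 : 0 ≤ (x₁ + d - α)/β := le_trans hp hxp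
    have hβx : β * ((x₁ + d - α)/β) + α = x₁ + d := by field_simp; ring
    have hFxx : F α β ((x₁ + d - α)/β) = x₁ := by
      rw [F, hβx, Int.fract, floor_add_digit hx₁0 hx₁1]
      push_cast; ring
    refine ⟨(x₁ + d - α)/β, hxp, lt_of_lt_of_le hmin (min_le_left _ _), ?_, ?_⟩
    · intro i hi
      match i with
      | 0 =>
        simp only [List.getD_cons_zero]
        rw [Om_zero_eq_iff hβ hα hx0 d, hβx]
        constructor <;> nlinarith
      | (i+1) =>
        rw [Om_succ, hFxx]
        have hi' : i < t.length := by simpa using hi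
        rw [hx₁w i hi']
        simp
    · rw [List.length_cons, Function.iterate_succ_apply, hFxx, hx₁F]


lemma not_tailAgrees_of_kmax_eq_zero {s : ℕ → ℕ} {w : List ℕ} (h : kmax s w = 0) {k : ℕ}
    (hk : 0 < k) (ht : tailAgrees s w k) : False := by
  have hbdd : BddAbove {k | tailAgrees s w k} := ⟨w.length, fun x hx => hx.1⟩
  have := le_csSup hbdd ht
  rw [kmax] at h
  omega

lemma fo_fst_eq (hβ : 0 < β) (hα : 0 ≤ α) (w : List ℕ) :
    (fo α β w).2 ≤ (fo α β w).1 ∨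
      ∃ j ≤ w.length, (fo α β w).1 = (F α β)^[j] 0 ∧
        ∀ i < j, w.getD (w.length - j + i) 0 = Om α β 0 i := by
  induction w using List.reverseRecOn with
  | nil => exact Or.inr ⟨0, by simp, by simp [fo, foA], by simp⟩
  | append_singleton u d ih =>
    rw [fo_append]
    rcases ih with hemp | ⟨j, hj, hpj, htail⟩
    · left
      have h1 : min (fo α β u).2 (((d:ℝ) + 1 - α)/β) ≤ max (fo α β u).1 (((d:ℝ) - α)/β) :=
        le_trans (min_le_left _ _) (le_trans hemp (le_max_left _ _))
      simp only [stp]; nlinarith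
    · have hpI : (fo α β u).1 ∈ Set.Ico (0:ℝ) 1 := by
        rw [hpj]; exact iter_mem_Ico α β ⟨le_refl 0, one_pos⟩ j
      have h0 : (0:ℝ) ≤ β * (fo α β u).1 + α := by nlinarith [hpI.1]
      rcases lt_trichotomy ⌊β * (fo α β u).1 + α⌋ (d:ℤ) with hlt | heq | hgt
      · -- digit too small: reset to 0
        right
        refine ⟨0, Nat.zero_le _, ?_, by omega⟩
        have hplt : (fo α β u).1 < ((d:ℝ) - α)/β := by
          rw [lt_div_iff₀ hβ]
          have : β * (fo α β u).1 + α < (d:ℤ) := by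
            calc β * (fo α β u).1 + α < ⌊β * (fo α β u).1 + α⌋ + 1 := Int.lt_floor_add_one _
            _ ≤ (d:ℤ) := by exact_mod_cast hlt
          push_cast at this ⊢
          nlinarith
        simp only [stp, max_eq_right hplt.le, Function.iterate_zero_apply]
        field_simp
        ring
      · -- digit matches: continue orbit of 0
        right
        have hd1 : (d:ℝ) ≤ β * (fo α β u).1 + α := by
          have := Int.floor_le (β * (fo α β u).1 + α)
          rw [heq] at this; exact_mod_cast this
        have hd2 : β * (fo α β u).1 + α < (d:ℝ) + 1 := by
          have := Int.lt_floor_add_one (β * (fo α β u).1 + α)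
          rw [heq] at this; exact_mod_cast this
        have hmax : max (fo α β u).1 (((d:ℝ) - α)/β) = (fo α β u).1 :=
          max_eq_left (by rw [div_le_iff₀ hβ]; nlinarith)
        have hOm : Om α β 0 j = d := by
          have : Om α β 0 j = (⌊β * (F α β)^[j] 0 + α⌋).toNat := rfl
          rw [this, ← hpj, heq]; simp
        refine ⟨j + 1, by simpa using Nat.succ_le_succ hj, ?_, ?_⟩
        · simp only [stp, hmax, Function.iterate_succ_apply', ← hpj]
          rw [F, Int.fract, heq]
          push_cast; ring
        · intro i hi
          have hlen : (u ++ [d]).length = u.length + 1 := by simp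
          rw [hlen]
          have hidx : u.length + 1 - (j + 1) + i = u.length - j + i := by omega
          rw [hidx]
          rcases Nat.lt_or_ge i j with hij | hij
          · have hlt : u.length - j + i < u.length := by omega
            rw [List.getD_append _ _ _ _ hlt]
            exact htail i hij
          · have hieq : i = j := by omega
            subst hieq
            have hidx2 : u.length - i + i = u.length := by omega
            rw [hidx2]
            rw [List.getD_append_right _ _ _ _ le_rfl]
            simpa using hOm.symm
      · -- digit too big: empty
        left
        have hd1 : (d:ℝ) + 1 ≤ β * (fo α β u).1 + α := by
          have h' : (d:ℤ) + 1 ≤ ⌊β * (fo α β u).1 + α⌋ := by omega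
          calc ((d:ℝ)+1) = (((d:ℤ)+1 : ℤ) : ℝ) := by push_cast; ring
          _ ≤ ⌊β * (fo α β u).1 + α⌋ := by exact_mod_cast h'
          _ ≤ β * (fo α β u).1 + α := Int.floor_le _
        have hq : min (fo α β u).2 (((d:ℝ) + 1 - α)/β) ≤ ((d:ℝ) + 1 - α)/β :=
          min_le_right _ _
        have hp : (fo α β u).1 ≤ max (fo α β u).1 (((d:ℝ) - α)/β) := le_max_left _ _
        rw [le_div_iff₀ hβ] at hq
        simp only [stp]; nlinarith

lemma a_zero (hα0 : 0 ≤ α) (hα1 : α < 1) : Om α β 0 0 = 0 := by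
  simp only [Om, Function.iterate_zero_apply, mul_zero, zero_add]
  rw [Int.floor_eq_zero_iff.mpr ⟨hα0, hα1⟩]
  rfl

lemma prefix_realized {b : ℕ → ℕ} (hb : b ∈ Sig α β) (n : ℕ) :
    ∃ x ∈ Set.Ico (0:ℝ) 1, ∀ i < n, Om α β x i = b i := by
  have hU : IsOpen {y : ℕ → ℕ | ∀ i < n, y i = b i} := by
    have he : {y : ℕ → ℕ | ∀ i < n, y i = b i}
        = ⋂ i ∈ Finset.range n, {y : ℕ → ℕ | y i = b i} := by
      ext y; simp [Finset.mem_range]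
    rw [he]
    refine isOpen_biInter_finset fun i _ => ?_
    have : {y : ℕ → ℕ | y i = b i} = (fun y : ℕ → ℕ => y i) ⁻¹' {b i} := rfl
    rw [this]
    exact (isOpen_discrete ({b i} : Set ℕ)).preimage (continuous_apply i)
  obtain ⟨z, hz1, hz2⟩ := mem_closure_iff.mp hb _ hU (fun i _ => rfl)
  obtain ⟨x, hx, rfl⟩ := hz2
  exact ⟨x, hx, hz1⟩

end Helpers

/-- **Lemma.** For `0 ≤ α < 1` and `β > 2`, the sequence `c` belongs to `Σ`. -/
theorem cseq_mem_Sig (α β : ℝ) (hα0 : 0 ≤ α) (hα1 : α < 1) (hβ : 2 < β)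
    (b : ℕ → ℕ) (hb : b ∈ Sig α β) (hbsup : ∀ y ∈ Sig α β, lexLe y b) :
    cseq (Om α β 0) b ∈ Sig α β := by
  have hβ0 : (0:ℝ) < β := by linarith
  have hreal : ∀ n, ∃ y, (fo α β (pre b n)).1 ≤ y ∧ y < (fo α β (pre b n)).2 := by
    intro n
    obtain ⟨x, hx, hxb⟩ := prefix_realized hb n
    have hw : ∀ i < (pre b n).length, Om α β x i = (pre b n).getD i 0 := by
      intro i hi
      rw [pre_length] at hi
      rw [pre_getD b hi]
      exact hxb i hi
    have := mem_foA hβ0 hα0 (pre b n) 0 1 x hx hx.1 hx.2 hw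
    exact ⟨_, this.1, this.2⟩
  have key : ∀ n, (fo α β (pre (cseq (Om α β 0) b) n)).1 ≤ (fo α β (pre b n)).1 ∧
      (fo α β (pre b n)).2 ≤ (fo α β (pre (cseq (Om α β 0) b) n)).2 := by
    intro n
    induction n with
    | zero => simp [pre, fo, foA]
    | succ n ih =>
      rw [pre_succ (cseq (Om α β 0) b) n, pre_succ b n, fo_append, fo_append]
      by_cases hQ : kmax (Om α β 0) (pre b n) = 0 ∧ kmax (Om α β 0) (pre b (n+1)) = 0
      · have hcn : cseq (Om α β 0) b n = 1 := by unfold cseq; rw [if_pos hQ]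
        have hbn1 : 1 ≤ b n := by
          by_contra hcon
          have hb0 : b n = 0 := by omega
          refine not_tailAgrees_of_kmax_eq_zero hQ.2 one_pos ?_
          refine ⟨by rw [pre_length]; omega, ?_⟩
          intro i hi
          have hi0 : i = 0 := by omega
          subst hi0
          rw [pre_length]
          have he : n + 1 - 1 + 0 = n := by omega
          rw [he, pre_getD b (by omega), hb0, a_zero hα0 hα1]
        by_cases hbn : b n = 1
        · rw [hcn, hbn]; exact stp_mono hβ0 ih.1 ih.2 1
        · have hbn2 : 2 ≤ b n := by omega
          have hub : (fo α β (pre b n)).1 = 0 := by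
            rcases fo_fst_eq hβ0 hα0 (pre b n) with hemp | ⟨j, hj, hpj, htail⟩
            · obtain ⟨y, hy1, hy2⟩ := hreal n; linarith
            · rcases Nat.eq_zero_or_pos j with hj0 | hjpos
              · rw [hj0] at hpj; simpa using hpj
              · exact absurd ⟨hj, htail⟩
                  (fun ht => not_tailAgrees_of_kmax_eq_zero hQ.1 hjpos ht)
          have hq : ((b n : ℝ) - α)/β < (fo α β (pre b n)).2 := by
            obtain ⟨y, hy1, hy2⟩ := hreal (n+1)
            rw [pre_succ b n, fo_append] at hy1 hy2
            simp only [stp] at hy1 hy2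
            have hmx : ((b n:ℝ) - α)/β ≤ max (fo α β (pre b n)).1 (((b n:ℝ) - α)/β) :=
              le_max_right _ _
            have hmn : min (fo α β (pre b n)).2 (((b n:ℝ) + 1 - α)/β)
                ≤ (fo α β (pre b n)).2 := min_le_left _ _
            nlinarith
          rw [hcn]
          have hc1 : (0:ℝ) ≤ (((1:ℕ):ℝ) - α)/β := by
            apply div_nonneg _ hβ0.le; push_cast; linarith
          constructor
          · have hpc : (fo α β (pre (cseq (Om α β 0) b) n)).1 ≤ 0 := hub ▸ ih.1
            have h1 : max (fo α β (pre (cseq (Om α β 0) b) n)).1 ((((1:ℕ):ℝ) - α)/β)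
                = (((1:ℕ):ℝ) - α)/β := max_eq_right (le_trans hpc hc1)
            have h2 : max (fo α β (pre b n)).1 (((b n : ℝ) - α)/β) = ((b n:ℝ) - α)/β := by
              rw [hub]
              refine max_eq_right (div_nonneg ?_ hβ0.le)
              have : (1:ℝ) ≤ (b n : ℝ) := by exact_mod_cast hbn1
              linarith
            have e1 : β * ((((1:ℕ):ℝ) - α)/β) = ((1:ℕ):ℝ) - α := by field_simp
            have e2 : β * (((b n : ℝ) - α)/β) = (b n : ℝ) - α := by field_simp
            simp only [stp]
            rw [h1, h2, e1, e2]
            push_cast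
            linarith
          · have hR : ((((1:ℕ):ℝ)) + 1 - α)/β ≤ (fo α β (pre (cseq (Om α β 0) b) n)).2 := by
              have h2' : ((((1:ℕ):ℝ)) + 1 - α)/β ≤ ((b n:ℝ) - α)/β := by
                have : (2:ℝ) ≤ (b n : ℝ) := by exact_mod_cast hbn2
                gcongr
                push_cast
                linarith
              linarith [hq, ih.2]
            have hmin_c : min (fo α β (pre (cseq (Om α β 0) b) n)).2 ((((1:ℕ):ℝ) + 1 - α)/β)
                = (((1:ℕ):ℝ) + 1 - α)/β := min_eq_right hR
            have hmin_b : min (fo α β (pre b n)).2 (((b n:ℝ) + 1 - α)/β)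
                ≤ ((b n:ℝ) + 1 - α)/β := min_le_right _ _
            have e1 : β * ((((1:ℕ):ℝ) + 1 - α)/β) = ((1:ℕ):ℝ) + 1 - α := by field_simp
            have e2 : β * (((b n:ℝ) + 1 - α)/β) = (b n:ℝ) + 1 - α := by field_simp
            simp only [stp]
            rw [hmin_c, e1]
            have hle := mul_le_mul_of_nonneg_left hmin_b hβ0.le
            rw [e2] at hle
            push_cast
            push_cast at hle
            have hbn2' : (2:ℝ) ≤ (b n : ℝ) := by exact_mod_cast hbn2
            linarith
      · have hcn : cseq (Om α β 0) b n = b n := by unfold cseq; rw [if_neg hQ]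
        rw [hcn]
        exact stp_mono hβ0 ih.1 ih.2 (b n)
  have creal : ∀ m, ∃ x ∈ Set.Ico (0:ℝ) 1, ∀ i < m, Om α β x i = cseq (Om α β 0) b i := by
    intro m
    obtain ⟨y, hy1, hy2⟩ := hreal m
    obtain ⟨k1, k2⟩ := key m
    obtain ⟨x, hx0, hx1, hxw, -⟩ := foA_realize hβ0 hα0 (pre (cseq (Om α β 0) b) m) 0 1
      le_rfl le_rfl y (le_trans k1 hy1) (lt_of_lt_of_le hy2 k2)
    refine ⟨x, ⟨hx0, hx1⟩, fun i hi => ?_⟩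
    rw [← pre_getD (cseq (Om α β 0) b) hi]
    exact hxw i (by rw [pre_length]; exact hi)
  choose g hg1 hg2 using creal
  have htend : Filter.Tendsto (fun m => Om α β (g m)) Filter.atTop
      (nhds (cseq (Om α β 0) b)) := by
    rw [tendsto_pi_nhds]
    intro i
    have hev : ∀ᶠ m in Filter.atTop, Om α β (g m) i = cseq (Om α β 0) b i :=
      Filter.eventually_atTop.mpr ⟨i+1, fun m hm => hg2 m i (by omega)⟩
    exact Filter.Tendsto.congr' (Filter.EventuallyEq.symm hev) tendsto_const_nhds
  exact mem_closure_of_tendsto htend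
    (Filter.Eventually.of_forall fun m => Set.mem_image_of_mem _ (hg1 m))

end IntermediateBeta
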